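/- Let $x_1,\dots,x_k \in \mathbb{R}^d$ be nonzero at every coordinate used, let $\beta_2, \beta_3 \in (0,1)$ with $\beta_2^2/\beta_3 < 1$, and define $m_k = (1-\beta_2)\sum_{t=1}^k \beta_2^{k-t} x_t$ and $v_k = (1-\beta_3)\sum_{t=1}^k \beta_3^{k-t} x_t^2$ (squaring elementwise), where $v_k$ has strictly positive entries. Then the elementwise quotient satisfies $\left\| \frac{m_k}{\sqrt{v_k}} \right\| \le (1-\beta_2)\sqrt{\frac{d\,\beta_3}{(1-\beta_3)(\beta_3 - \beta_2^2)}}$. -/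

import Mathlib

open Finset


lemma geom_aux (r : ℝ) (h0 : 0 ≤ r) (h1 : r < 1) (n : ℕ) : ∑ i ∈ range n, r ^ i ≤ 1 / (1 - r) := by
  rw [geom_sum_eq h1.ne, show (r ^ n - 1) / (r - 1) = (1 - r ^ n) / (1 - r) by
    rw [← neg_div_neg_eq]; ring_nf]
  rw [div_le_div_iff₀ (by linarith) (by linarith)]
  nlinarith [pow_nonneg h0 n]

lemma reindex_aux (r : ℝ) (k : ℕ) : ∑ t ∈ Finset.Icc 1 k, r ^ (k - t) = ∑ j ∈ range k, r ^ j := by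
  apply Finset.sum_nbij' (fun t => k - t) (fun j => k - j)
  · intro t ht; simp only [mem_Icc] at ht; simp only [mem_range]; omega
  · intro j hj; simp only [mem_range] at hj; simp only [mem_Icc]; omega
  · intro t ht; simp only [mem_Icc] at ht; omega
  · intro j hj; simp only [mem_range] at hj; omega
  · intro t ht; rfl


/-- Build a vector in `ℝ^d` from its coordinates. -/
def vec {d : ℕ} (f : Fin d → ℝ) : EuclideanSpace ℝ (Fin d) := WithLp.toLp 2 f

/-- Bound on the normalized momentum: for `m_k = (1-β₂) ∑_{t=1}^k β₂^{k-t} x_t` and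
`v_k = (1-β₃) ∑_{t=1}^k β₃^{k-t} x_t²` (elementwise), with `x_t` nonzero in every
coordinate, `β₂, β₃ ∈ (0,1)`, `β₂²/β₃ < 1` and `v_k` strictly positive, one has
`‖m_k/√v_k‖ ≤ (1-β₂) √(d β₃ / ((1-β₃)(β₃ - β₂²)))`. -/
theorem normalized_momentum_bound
    {d : ℕ} (k : ℕ) (β₂ β₃ : ℝ)
    (hβ₂ : β₂ ∈ Set.Ioo (0 : ℝ) 1) (hβ₃ : β₃ ∈ Set.Ioo (0 : ℝ) 1)
    (hratio : β₂ ^ 2 / β₃ < 1)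
    (x : ℕ → EuclideanSpace ℝ (Fin d))
    (hx : ∀ t ∈ Finset.Icc 1 k, ∀ i, x t i ≠ 0)
    (m v : EuclideanSpace ℝ (Fin d))
    (hm : m = vec (fun i => (1 - β₂) * ∑ t ∈ Finset.Icc 1 k, β₂ ^ (k - t) * x t i))
    (hv : v = vec (fun i => (1 - β₃) * ∑ t ∈ Finset.Icc 1 k, β₃ ^ (k - t) * (x t i) ^ 2))
    (hvpos : ∀ i, 0 < v i) :
    ‖vec (fun i => m i / Real.sqrt (v i))‖ ≤
      (1 - β₂) * Real.sqrt (d * β₃ / ((1 - β₃) * (β₃ - β₂ ^ 2))) := by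
  obtain ⟨hβ₂0, hβ₂1⟩ := hβ₂
  obtain ⟨hβ₃0, hβ₃1⟩ := hβ₃
  have hsq : β₂ ^ 2 < β₃ := (div_lt_one hβ₃0).mp hratio
  set C : ℝ := β₃ / ((1 - β₃) * (β₃ - β₂ ^ 2)) with hC
  have hC0 : 0 ≤ C := by
    apply div_nonneg hβ₃0.le
    have : 0 < 1 - β₃ := by linarith
    nlinarith
  have key : ∀ i, (m i / Real.sqrt (v i)) ^ 2 ≤ (1 - β₂) ^ 2 * C := by
    intro i
    set S : ℝ := ∑ t ∈ Finset.Icc 1 k, β₃ ^ (k - t) * (x t i) ^ 2 with hS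
    have hvi : v i = (1 - β₃) * S := by rw [hv]; rfl
    have hvip := hvpos i
    have hSpos : 0 < S := by
      by_contra h
      push_neg at h
      nlinarith
    have hmi : m i = (1 - β₂) * ∑ t ∈ Finset.Icc 1 k, β₂ ^ (k - t) * x t i := by
      rw [hm]; rfl
    -- Cauchy–Schwarz
    have hcs : (∑ t ∈ Finset.Icc 1 k, β₂ ^ (k - t) * x t i) ^ 2 ≤
        (∑ t ∈ Finset.Icc 1 k, (β₂ ^ 2 / β₃) ^ (k - t)) * S := by
      have := Finset.sum_mul_sq_le_sq_mul_sq (Finset.Icc 1 k)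
        (fun t => (β₂ / Real.sqrt β₃) ^ (k - t))
        (fun t => Real.sqrt β₃ ^ (k - t) * x t i)
      have hsβ : Real.sqrt β₃ ≠ 0 := by positivity
      calc (∑ t ∈ Finset.Icc 1 k, β₂ ^ (k - t) * x t i) ^ 2
          = (∑ t ∈ Finset.Icc 1 k,
              (β₂ / Real.sqrt β₃) ^ (k - t) * (Real.sqrt β₃ ^ (k - t) * x t i)) ^ 2 := by
            congr 1; apply Finset.sum_congr rfl; intro t _
            rw [← mul_assoc, ← mul_pow, div_mul_cancel₀ _ hsβ]
        _ ≤ (∑ t ∈ Finset.Icc 1 k, ((β₂ / Real.sqrt β₃) ^ (k - t)) ^ 2) *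
            ∑ t ∈ Finset.Icc 1 k, (Real.sqrt β₃ ^ (k - t) * x t i) ^ 2 := this
        _ = (∑ t ∈ Finset.Icc 1 k, (β₂ ^ 2 / β₃) ^ (k - t)) * S := by
            congr 1
            · apply Finset.sum_congr rfl; intro t _
              rw [← pow_mul, mul_comm (k - t) 2, pow_mul, div_pow,
                Real.sq_sqrt hβ₃0.le]
            · apply Finset.sum_congr rfl; intro t _
              rw [mul_pow, ← pow_mul, mul_comm (k - t) 2, pow_mul,
                Real.sq_sqrt hβ₃0.le]
    have hgeom : (∑ t ∈ Finset.Icc 1 k, (β₂ ^ 2 / β₃) ^ (k - t)) ≤ β₃ / (β₃ - β₂ ^ 2) := by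
      rw [reindex_aux]
      refine (geom_aux _ (by positivity) hratio k).trans_eq ?_
      have h1 : β₃ ≠ 0 := hβ₃0.ne'
      have h2 : β₃ - β₂ ^ 2 ≠ 0 := by nlinarith
      field_simp
    have hsum : (∑ t ∈ Finset.Icc 1 k, β₂ ^ (k - t) * x t i) ^ 2 ≤ β₃ / (β₃ - β₂ ^ 2) * S :=
      hcs.trans (by nlinarith)
    have hq : (m i / Real.sqrt (v i)) ^ 2 = m i ^ 2 / v i := by
      rw [div_pow, Real.sq_sqrt hvip.le]
    rw [hq, div_le_iff₀ hvip, hvi, hmi, mul_pow]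
    have hCs : C * ((1 - β₃) * S) = β₃ / (β₃ - β₂ ^ 2) * S := by
      have h13 : (1:ℝ) - β₃ ≠ 0 := by linarith
      have h32 : β₃ - β₂ ^ 2 ≠ 0 := by nlinarith
      rw [hC]; field_simp
    calc (1 - β₂) ^ 2 * (∑ t ∈ Finset.Icc 1 k, β₂ ^ (k - t) * x t i) ^ 2
        ≤ (1 - β₂) ^ 2 * (β₃ / (β₃ - β₂ ^ 2) * S) := by nlinarith [sq_nonneg (1 - β₂)]
      _ = (1 - β₂) ^ 2 * C * ((1 - β₃) * S) := by rw [← hCs]; ring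
  -- norm computation
  have hnorm : ‖vec (fun i => m i / Real.sqrt (v i))‖ =
      Real.sqrt (∑ i, (m i / Real.sqrt (v i)) ^ 2) := by
    rw [EuclideanSpace.norm_eq]
    congr 1; apply Finset.sum_congr rfl; intro i _
    rw [Real.norm_eq_abs, sq_abs]; rfl
  rw [hnorm]
  have hsum : (∑ i, (m i / Real.sqrt (v i)) ^ 2) ≤ d * ((1 - β₂) ^ 2 * C) := by
    calc (∑ i, (m i / Real.sqrt (v i)) ^ 2) ≤ ∑ _i : Fin d, (1 - β₂) ^ 2 * C :=
        Finset.sum_le_sum fun i _ => key i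
      _ = d * ((1 - β₂) ^ 2 * C) := by rw [Finset.sum_const, card_univ]; simp [nsmul_eq_mul]
  refine (Real.sqrt_le_sqrt hsum).trans_eq ?_
  rw [show (d : ℝ) * ((1 - β₂) ^ 2 * C) = (1 - β₂) ^ 2 * (d * C) by ring,
    Real.sqrt_mul (sq_nonneg _), Real.sqrt_sq (by linarith), hC, mul_div_assoc]
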